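/- For integers m ≥ 1 and 0 ≤ p ≤ m/2, the number of standard Young tableaux of the two-row shape [m−p, p] equals C(m,p) − C(m,p−1), where C(m,−1) = 0 by convention. -/

import Mathlib

/-- `AddBox μ ν` means `ν` is obtained from `μ` by adding a single box (`μ → ν`). -/
def AddBox (μ ν : YoungDiagram) : Prop := μ ≤ ν ∧ ν.card = μ.card + 1

/-- `AdjBox μ ν` means `μ ↔ ν`, i.e. the diagrams differ by a single box. -/
def AdjBox (μ ν : YoungDiagram) : Prop := AddBox μ ν ∨ AddBox ν μ

/-- `RowsEq μ L` means the row lengths of `μ` are given by the list `L`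
(rows beyond the length of `L` being empty). -/
def RowsEq (μ : YoungDiagram) (L : List ℕ) : Prop := ∀ i, μ.rowLen i = L.getD i 0

/-- `Λ(j,ℓ)`: Young diagrams of size `j` with at most two rows whose
row difference is at most `ℓ - 2`. -/
def LambdaSet (j ℓ : ℕ) : Set YoungDiagram :=
  {μ | μ.card = j ∧ μ.rowLen 2 = 0 ∧ μ.rowLen 0 - μ.rowLen 1 ≤ ℓ - 2}

/-- `Γ(ℓ)` for a finite `ℓ ≥ 6`. -/
def GammaSet (ℓ : ℕ) : Set YoungDiagram :=
  {μ | μ.colLen 0 + μ.colLen 1 ≤ 4 ∧ μ.rowLen 0 + μ.rowLen 1 ≤ ℓ - 2}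
    ∪ {μ | RowsEq μ [ℓ - 2, 1, 1]}

/-- `Γ(∞)`: diagrams whose first two column lengths sum to at most `4`. -/
def GammaInf : Set YoungDiagram := {μ | μ.colLen 0 + μ.colLen 1 ≤ 4}

/-- A Young-tableau path of length `m`, with the `j`-th shape restricted to lie in `P j`. -/
def IsTabPath (P : ℕ → Set YoungDiagram) (m : ℕ) (f : Fin (m + 1) → YoungDiagram) : Prop :=
  f 0 = ⊥ ∧ (∀ j : Fin m, AddBox (f j.castSucc) (f j.succ)) ∧
    ∀ j : Fin (m + 1), f j ∈ P (j : ℕ)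

/-- An oscillating-tableau path of length `m` with all shapes in `Γ`. -/
def IsOscPath (Γ : Set YoungDiagram) (m : ℕ) (f : Fin (m + 1) → YoungDiagram) : Prop :=
  f 0 = ⊥ ∧ (∀ j : Fin m, AdjBox (f j.castSucc) (f j.succ)) ∧
    ∀ j : Fin (m + 1), f j ∈ Γ

/-- The number of Young tableaux (paths) of length `m`, with shapes restricted by `P`,
whose final shape has row lengths `L`. -/
noncomputable def tabCount (P : ℕ → Set YoungDiagram) (m : ℕ) (L : List ℕ) : ℕ :=
  Nat.card {f : Fin (m + 1) → YoungDiagram //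
    IsTabPath P m f ∧ RowsEq (f (Fin.last m)) L}

/-- The number of oscillating tableaux of length `m` with shapes in `Γ`
whose final shape has row lengths `L`. -/
noncomputable def oscCount (Γ : Set YoungDiagram) (m : ℕ) (L : List ℕ) : ℕ :=
  Nat.card {f : Fin (m + 1) → YoungDiagram //
    IsOscPath Γ m f ∧ RowsEq (f (Fin.last m)) L}

/-- The number of oscillating tableaux of length `m` with shapes in `Γ` and final shape `ν`. -/
noncomputable def oscCountD (Γ : Set YoungDiagram) (m : ℕ) (ν : YoungDiagram) : ℕ :=
  Nat.card {f : Fin (m + 1) → YoungDiagram //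
    IsOscPath Γ m f ∧ f (Fin.last m) = ν}

namespace TRAux

/-- The two-row diagram [a,b]. -/
def twoRow (a b : ℕ) (h : b ≤ a) : YoungDiagram :=
  YoungDiagram.ofRowLens [a, b] (by simp [List.sortedGE_iff_pairwise, List.pairwise_cons, h])

lemma mem_twoRow {a b : ℕ} {h : b ≤ a} {c : ℕ × ℕ} :
    c ∈ twoRow a b h ↔ (c.1 = 0 ∧ c.2 < a) ∨ (c.1 = 1 ∧ c.2 < b) := by
  obtain ⟨i, j⟩ := c
  rw [twoRow, YoungDiagram.mem_ofRowLens]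
  match i with
  | 0 => simp
  | 1 => simp
  | (n+2) => simp

lemma rowLen_twoRow {a b : ℕ} {h : b ≤ a} (i : ℕ) :
    (twoRow a b h).rowLen i = if i = 0 then a else if i = 1 then b else 0 := by
  match i with
  | 0 => simpa [twoRow] using YoungDiagram.rowLen_ofRowLens (w := [a,b]) (⟨0, by simp⟩)
  | 1 => simpa [twoRow] using YoungDiagram.rowLen_ofRowLens (w := [a,b]) (⟨1, by simp⟩)
  | (n+2) =>
    simp only [if_neg (by omega : ¬ n+2 = 0), if_neg (by omega : ¬ n+2 = 1)]
    by_contra h'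
    have : ((n+2 : ℕ), (0:ℕ)) ∈ twoRow a b h :=
      YoungDiagram.mem_iff_lt_rowLen.mpr (Nat.pos_of_ne_zero h')
    rw [mem_twoRow] at this
    omega

lemma eq_of_rowLen_eq {μ ν : YoungDiagram} (h : ∀ i, μ.rowLen i = ν.rowLen i) : μ = ν := by
  ext c
  obtain ⟨i, j⟩ := c
  rw [YoungDiagram.mem_cells, YoungDiagram.mem_cells, YoungDiagram.mem_iff_lt_rowLen,
    YoungDiagram.mem_iff_lt_rowLen, h]

lemma twoRow_congr {a b a' b' : ℕ} {h : b ≤ a} {h' : b' ≤ a'} (ha : a = a') (hb : b = b') :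
    twoRow a b h = twoRow a' b' h' := by subst ha; subst hb; rfl

lemma card_twoRow (a b : ℕ) (h : b ≤ a) : (twoRow a b h).card = a + b := by
  have hc : (twoRow a b h).cells
      = ({0} ×ˢ Finset.range a) ∪ ({1} ×ˢ Finset.range b) := by
    ext ⟨i, j⟩
    simp [mem_twoRow]
    omega
  rw [YoungDiagram.card, hc, Finset.card_union_of_disjoint, Finset.card_product,
    Finset.card_product]
  · simp
  · simp [Finset.disjoint_left]

lemma twoRow_zero : twoRow 0 0 (le_refl 0) = ⊥ := by
  ext c; simp [mem_twoRow]

lemma rowLen_le_of_le {μ ν : YoungDiagram} (h : μ ≤ ν) (i : ℕ) :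
    μ.rowLen i ≤ ν.rowLen i := by
  by_cases hz : μ.rowLen i = 0
  · omega
  · have hm : (i, μ.rowLen i - 1) ∈ μ := by
      rw [YoungDiagram.mem_iff_lt_rowLen]; omega
    have := YoungDiagram.mem_iff_lt_rowLen.mp (h hm)
    omega

lemma twoRow_le {a b a' b' : ℕ} {h : b ≤ a} {h' : b' ≤ a'} (ha : a' ≤ a) (hb : b' ≤ b) :
    twoRow a' b' h' ≤ twoRow a b h := by
  intro c hc
  rw [mem_twoRow] at hc ⊢
  omega

lemma addBox_twoRow_of {a b a' b' : ℕ} (h : b ≤ a) (h' : b' ≤ a')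
    (ha : a' ≤ a) (hb : b' ≤ b) (hcard : a + b = a' + b' + 1) :
    AddBox (twoRow a' b' h') (twoRow a b h) :=
  ⟨twoRow_le ha hb, by rw [card_twoRow, card_twoRow]; omega⟩

/-- Classification of the shapes obtained by removing a box from a two-row shape. -/
lemma addBox_twoRow {a b : ℕ} (h : b ≤ a) {μ : YoungDiagram}
    (hμ : AddBox μ (twoRow a b h)) :
    (∃ h1 : b ≤ a - 1, 1 ≤ a ∧ μ = twoRow (a-1) b h1) ∨
    (∃ h2 : b - 1 ≤ a, 1 ≤ b ∧ μ = twoRow a (b-1) h2) := by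
  have hb' : μ.rowLen 1 ≤ μ.rowLen 0 := μ.rowLen_anti 0 1 (by omega)
  have hμeq : μ = twoRow (μ.rowLen 0) (μ.rowLen 1) hb' := by
    apply eq_of_rowLen_eq
    intro i
    rw [rowLen_twoRow]
    match i with
    | 0 => simp
    | 1 => simp
    | (n+2) =>
      simp only [if_neg (by omega : ¬ n+2 = 0), if_neg (by omega : ¬ n+2 = 1)]
      have h2 : μ.rowLen 2 ≤ (twoRow a b h).rowLen 2 := rowLen_le_of_le hμ.1 2
      rw [rowLen_twoRow] at h2
      simp only [if_neg (by omega : ¬ (2:ℕ) = 0), if_neg (by omega : ¬ (2:ℕ) = 1)] at h2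
      have := μ.rowLen_anti 2 (n+2) (by omega)
      omega
  have ha0 : μ.rowLen 0 ≤ a := by
    have := rowLen_le_of_le hμ.1 0; rwa [rowLen_twoRow] at this
  have hb0 : μ.rowLen 1 ≤ b := by
    have := rowLen_le_of_le hμ.1 1
    rw [rowLen_twoRow] at this
    simpa using this
  have hcard : a + b = μ.rowLen 0 + μ.rowLen 1 + 1 := by
    have := hμ.2
    rw [card_twoRow] at this
    rw [hμeq, card_twoRow] at this
    omega
  rcases Nat.lt_or_ge (μ.rowLen 0) a with hlt | hge
  · left
    have h0 : μ.rowLen 0 = a - 1 := by omega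
    have h1 : μ.rowLen 1 = b := by omega
    exact ⟨by omega, by omega, hμeq.trans (twoRow_congr h0 h1)⟩
  · right
    have h0 : μ.rowLen 0 = a := by omega
    have h1 : μ.rowLen 1 = b - 1 := by omega
    exact ⟨by omega, by omega, hμeq.trans (twoRow_congr h0 h1)⟩

lemma twoRow_ne {a b a' b' : ℕ} {h : b ≤ a} {h' : b' ≤ a'} (hb : b ≠ b') :
    twoRow a b h ≠ twoRow a' b' h' := by
  intro e
  have := congrArg (fun μ : YoungDiagram => μ.rowLen 1) e
  simp only [rowLen_twoRow] at this
  simp at this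
  omega

def TabSet (m : ℕ) (ν : YoungDiagram) :=
  {f : Fin (m+1) → YoungDiagram // IsTabPath (fun _ => Set.univ) m f ∧ f (Fin.last m) = ν}

instance (m : ℕ) (ν : YoungDiagram) : Finite (TabSet m ν) := by
  let F : TabSet m ν → (Fin (m+1) → {s // s ∈ ν.cells.powerset}) := fun f j =>
    ⟨(f.1 j).cells, by
      rw [Finset.mem_powerset]
      have hmono : Monotone f.1 := Fin.monotone_iff_le_succ.mpr (fun i => (f.2.1.2.1 i).1)
      exact le_trans (hmono (Fin.le_last j)) (le_of_eq (congrArg YoungDiagram.cells f.2.2))⟩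
  apply Finite.of_injective F
  intro f g hfg
  apply Subtype.ext; funext j
  have h2 : (f.1 j).cells = (g.1 j).cells := congrArg Subtype.val (congrFun hfg j)
  exact YoungDiagram.ext h2

/-- extend a path by one box -/
def ext1 {m : ℕ} {ν μ : YoungDiagram} (hμ : AddBox μ ν) (g : TabSet m μ) :
    TabSet (m+1) ν := by
  refine ⟨Fin.snoc g.1 ν, ⟨?_, ?_, fun j => Set.mem_univ _⟩, by rw [Fin.snoc_last]⟩
  · rw [show (0 : Fin (m+2)) = Fin.castSucc 0 from rfl, Fin.snoc_castSucc]
    exact g.2.1.1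
  · intro j
    refine Fin.lastCases ?_ ?_ j
    · rw [Fin.succ_last, Fin.snoc_last, Fin.snoc_castSucc, g.2.2]
      exact hμ
    · intro i
      rw [Fin.succ_castSucc, Fin.snoc_castSucc, Fin.snoc_castSucc]
      exact g.2.1.2.1 i

lemma snoc_init {m : ℕ} {ν : YoungDiagram} (f : TabSet (m+1) ν) :
    Fin.snoc (fun j => f.1 j.castSucc) ν = f.1 := by
  funext j
  refine Fin.lastCases ?_ ?_ j
  · rw [Fin.snoc_last, f.2.2]
  · intro i; rw [Fin.snoc_castSucc]

lemma init_isTabPath {m : ℕ} {f : Fin (m+2) → YoungDiagram}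
    (hf : IsTabPath (fun _ => Set.univ) (m+1) f) :
    IsTabPath (fun _ => Set.univ) m (fun j => f j.castSucc) := by
  refine ⟨hf.1, fun j => ?_, fun j => Set.mem_univ _⟩
  show AddBox (f (Fin.castSucc (Fin.castSucc j))) (f (Fin.castSucc j.succ))
  rw [← Fin.succ_castSucc]
  exact hf.2.1 j.castSucc

lemma penult_addBox {m : ℕ} {ν : YoungDiagram} (f : TabSet (m+1) ν) :
    AddBox (f.1 (Fin.castSucc (Fin.last m))) ν := by
  have := f.2.1.2.1 (Fin.last m)
  rwa [Fin.succ_last, f.2.2] at this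

lemma init_snoc {m : ℕ} {ν : YoungDiagram} (g : Fin (m+1) → YoungDiagram) :
    (fun j : Fin (m+1) => (Fin.snoc g ν : Fin (m+2) → YoungDiagram) j.castSucc) = g := by
  funext j; exact Fin.snoc_castSucc _ _ j

lemma card_single {m : ℕ} {ν μ₁ : YoungDiagram} (h1 : AddBox μ₁ ν)
    (huniq : ∀ μ, AddBox μ ν → μ = μ₁) :
    Nat.card (TabSet (m+1) ν) = Nat.card (TabSet m μ₁) := by
  apply Nat.card_congr
  refine ⟨fun f => ⟨fun j => f.1 j.castSucc,
      init_isTabPath f.2.1, huniq _ (penult_addBox f)⟩,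
    ext1 h1, fun f => ?_, fun g => ?_⟩
  · exact Subtype.ext (snoc_init f)
  · exact Subtype.ext (init_snoc g.1)

lemma card_split {m : ℕ} {ν μ₁ μ₂ : YoungDiagram} (h1 : AddBox μ₁ ν) (h2 : AddBox μ₂ ν)
    (hne : μ₁ ≠ μ₂) (hcl : ∀ μ, AddBox μ ν → μ = μ₁ ∨ μ = μ₂) :
    Nat.card (TabSet (m+1) ν) = Nat.card (TabSet m μ₁) + Nat.card (TabSet m μ₂) := by
  classical
  rw [← Nat.card_sum]
  apply Nat.card_congr
  refine ⟨fun f => if hc : f.1 (Fin.castSucc (Fin.last m)) = μ₁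
      then Sum.inl ⟨fun j => f.1 j.castSucc, init_isTabPath f.2.1, hc⟩
      else Sum.inr ⟨fun j => f.1 j.castSucc, init_isTabPath f.2.1,
        (hcl _ (penult_addBox f)).resolve_left hc⟩,
    Sum.elim (ext1 h1) (ext1 h2), fun f => ?_, fun g => ?_⟩
  · by_cases hc : f.1 (Fin.castSucc (Fin.last m)) = μ₁ <;>
      simp only [hc, dif_pos, dif_neg, not_false_iff] <;>
      exact Subtype.ext (snoc_init f)
  · rcases g with g | g
    · have hc : (Fin.snoc g.1 ν : Fin (m+2) → YoungDiagram) (Fin.castSucc (Fin.last m)) = μ₁ := by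
        rw [Fin.snoc_castSucc]; exact g.2.2
      simp only [Sum.elim_inl, ext1]
      exact (dif_pos hc).trans (congrArg Sum.inl (Subtype.ext (init_snoc g.1)))
    · have hc : (Fin.snoc g.1 ν : Fin (m+2) → YoungDiagram) (Fin.castSucc (Fin.last m)) = μ₂ := by
        rw [Fin.snoc_castSucc]; exact g.2.2
      have hc' : ¬ (Fin.snoc g.1 ν : Fin (m+2) → YoungDiagram) (Fin.castSucc (Fin.last m)) = μ₁ := by
        rw [hc]; exact fun e => hne e.symm
      simp only [Sum.elim_inr, ext1]
      exact (dif_neg hc').trans (congrArg Sum.inr (Subtype.ext (init_snoc g.1)))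

lemma card_zero : Nat.card (TabSet 0 ⊥) = 1 := by
  rw [Nat.card_eq_one_iff_unique]
  constructor
  · constructor
    intro f g
    apply Subtype.ext; funext j
    rw [show j = 0 from Fin.ext (Nat.lt_one_iff.mp j.isLt), f.2.1.1, g.2.1.1]
  · exact ⟨⟨fun _ => ⊥, ⟨rfl, fun j => j.elim0, fun j => Set.mem_univ _⟩, rfl⟩⟩

lemma main (m : ℕ) : ∀ (p : ℕ), 2 * p ≤ m → ∀ (h : p ≤ m - p),
    Nat.card (TabSet m (twoRow (m - p) p h))
      = m.choose p - (if p = 0 then 0 else m.choose (p - 1)) := by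
  induction m with
  | zero =>
    intro p hp h
    have hp0 : p = 0 := by omega
    subst hp0
    rw [show twoRow (0-0) 0 h = ⊥ from twoRow_zero]
    simpa using card_zero
  | succ m ih =>
    intro p hp h
    rcases Nat.eq_zero_or_pos p with rfl | hp1
    · -- unique predecessor [m, 0]
      have h1 : AddBox (twoRow (m - 0) 0 (by omega)) (twoRow (m+1-0) 0 h) :=
        addBox_twoRow_of _ _ (by omega) (by omega) (by omega)
      rw [card_single h1 ?_]
      · rw [ih 0 (by omega) (by omega)]
        simp
      · intro μ hμ
        rcases addBox_twoRow _ hμ with ⟨h1', _, he⟩ | ⟨h2', hb, he⟩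
        · exact he.trans (twoRow_congr (by omega) rfl)
        · omega
    · rcases Nat.lt_or_ge (2 * p) (m + 1) with hlt | hge
      · -- two predecessors: [m-p, p] and [m+1-p, p-1]
        have hmp : 2 * p ≤ m := by omega
        have h1 : AddBox (twoRow (m - p) p (by omega)) (twoRow (m+1-p) p h) :=
          addBox_twoRow_of _ _ (by omega) (by omega) (by omega)
        have h2 : AddBox (twoRow (m - (p-1)) (p-1) (by omega)) (twoRow (m+1-p) p h) :=
          addBox_twoRow_of _ _ (by omega) (by omega) (by omega)
        rw [card_split h1 h2 (twoRow_ne (by omega)) ?_]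
        · rw [ih p hmp (by omega), ih (p-1) (by omega) (by omega)]
          -- arithmetic
          rcases Nat.exists_eq_add_of_le hp1 with ⟨q, hq⟩
          have hpq : p = q + 1 := by omega
          subst hpq
          simp only [Nat.add_sub_cancel, if_neg (by omega : ¬ q + 1 = 0)]
          rcases Nat.eq_zero_or_pos q with rfl | hq1
          · simp [Nat.choose_one_right]
            omega
          · have e1 : (m+1).choose (q+1) = m.choose q + m.choose (q+1) :=
              Nat.choose_succ_succ m q
            have e2 : (m+1).choose q = m.choose (q-1) + m.choose q := by
              rcases Nat.exists_eq_add_of_le hq1 with ⟨r, hr⟩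
              have : q = r + 1 := by omega
              subst this
              simpa using Nat.choose_succ_succ m r
            have i1 : m.choose q ≤ m.choose (q+1) :=
              Nat.choose_le_succ_of_lt_half_left (by omega)
            have i2 : m.choose (q-1) ≤ m.choose q := by
              have := Nat.choose_le_succ_of_lt_half_left (r := q - 1) (n := m) (by omega)
              rwa [show q - 1 + 1 = q by omega] at this
            simp only [if_neg (by omega : ¬ q = 0)]
            omega
        · intro μ hμ
          rcases addBox_twoRow _ hμ with ⟨h1', _, he⟩ | ⟨h2', hb, he⟩
          · exact Or.inl (he.trans (twoRow_congr (by omega) rfl))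
          · exact Or.inr (he.trans (twoRow_congr (by omega) rfl))
      · -- 2p = m+1 : unique predecessor [p, p-1] = [m - (p-1), p-1]
        have h2 : AddBox (twoRow (m - (p-1)) (p-1) (by omega)) (twoRow (m+1-p) p h) :=
          addBox_twoRow_of _ _ (by omega) (by omega) (by omega)
        rw [card_single h2 ?_]
        · rw [ih (p-1) (by omega) (by omega)]
          rcases Nat.exists_eq_add_of_le hp1 with ⟨q, hq⟩
          have hpq : p = q + 1 := by omega
          subst hpq
          have hmq : m = 2 * q + 1 := by omega
          subst hmq
          simp only [Nat.add_sub_cancel, if_neg (by omega : ¬ q + 1 = 0)]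
          have e1 : (2*q+1+1).choose (q+1) = (2*q+1).choose q + (2*q+1).choose (q+1) :=
            Nat.choose_succ_succ _ q
          have esym : (2*q+1).choose (q+1) = (2*q+1).choose q := Nat.choose_symm_half q
          rcases Nat.eq_zero_or_pos q with rfl | hq1
          · simp
          · have e2 : (2*q+1+1).choose q = (2*q+1).choose (q-1) + (2*q+1).choose q := by
              rcases Nat.exists_eq_add_of_le hq1 with ⟨r, hr⟩
              have : q = r + 1 := by omega
              subst this
              simpa using Nat.choose_succ_succ (2*(r+1)+1) r
            have i2 : (2*q+1).choose (q-1) ≤ (2*q+1).choose q := by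
              have := Nat.choose_le_succ_of_lt_half_left (r := q - 1) (n := 2*q+1) (by omega)
              rwa [show q - 1 + 1 = q by omega] at this
            simp only [if_neg (by omega : ¬ q = 0)]
            omega
        · intro μ hμ
          rcases addBox_twoRow _ hμ with ⟨h1', _, he⟩ | ⟨h2', hb, he⟩
          · omega
          · exact he.trans (twoRow_congr (by omega) rfl)

lemma rowsEq_iff {a b : ℕ} (h : b ≤ a) (μ : YoungDiagram) :
    RowsEq μ [a, b] ↔ μ = twoRow a b h := by
  constructor
  · intro hr
    apply eq_of_rowLen_eq
    intro i
    rw [rowLen_twoRow, hr i]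
    match i with
    | 0 => simp
    | 1 => simp
    | (n+2) => simp
  · rintro rfl i
    rw [rowLen_twoRow]
    match i with
    | 0 => simp
    | 1 => simp
    | (n+2) => simp

end TRAux

/-- Lemma 2.2(a) (Jones): the number of standard Young tableaux of the two-row
shape `[m-p, p]` is `C(m,p) - C(m,p-1)`, with `C(m,-1) = 0` by convention. -/
theorem std_tab_count_two_row (m p : ℕ) (hm : 1 ≤ m) (hp : 2 * p ≤ m) :
    tabCount (fun _ => Set.univ) m [m - p, p]
      = m.choose p - (if p = 0 then 0 else m.choose (p - 1)) := by
  have h : p ≤ m - p := by omega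
  have e : tabCount (fun _ => Set.univ) m [m - p, p]
      = Nat.card (TRAux.TabSet m (TRAux.twoRow (m - p) p h)) := by
    apply Nat.card_congr
    exact Equiv.subtypeEquivRight (fun f =>
      and_congr_right (fun _ => TRAux.rowsEq_iff h _))
  rw [e]
  exact TRAux.main m p hp h
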